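/- In the RandGreeDi algorithm with m machines, for each machine i, the expected value of the greedy solution S_i computed on machine i's random subset satisfies E[f(S_i)] ≥ α · f⁻(𝟙_OPT − p), where α is the approximation ratio of Greedy, p_e = Pr_{A~V(1/m)}[e ∈ Greedy(A ∪ {e})] for e ∈ OPT and p_e = 0 otherwise. -/

import Mathlib

open MeasureTheory Finset

/-- A set function is submodular. -/
def Submodular {V : Type*} [DecidableEq V] (f : Finset V → ℝ) : Prop :=
  ∀ A B : Finset V, f (A ∪ B) + f (A ∩ B) ≤ f A + f B

/-- The Lovász extension: expectation over a uniform threshold θ ∈ (0,1). -/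
noncomputable def lovasz {V : Type*} [Fintype V] [DecidableEq V]
    (f : Finset V → ℝ) (x : V → ℝ) : ℝ :=
  ∫ θ in Set.Ioo (0:ℝ) 1, f (Finset.univ.filter (fun i => θ ≤ x i))

/-- Characteristic vector of a finite set. -/
def charVec {V : Type*} [DecidableEq V] (S : Finset V) : V → ℝ :=
  fun i => if i ∈ S then 1 else 0
/-- One pass of the standard greedy algorithm with fuel `n`: at each step add the
feasible element of `X` with maximum nonnegative marginal gain, breaking ties by
the fixed linear order on `V` (choosing the least maximizer). -/
noncomputable def greedyAux {V : Type*} [Fintype V] [DecidableEq V] [LinearOrder V]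
    (f : Finset V → ℝ) (I : Finset V → Prop) [DecidablePred I]
    (X : Finset V) : ℕ → Finset V → Finset V
  | 0, S => S
  | (n+1), S =>
    let C := (X \ S).filter (fun e => I (insert e S) ∧ 0 ≤ f (insert e S) - f S)
    let M := C.filter (fun e => ∀ e' ∈ C, f (insert e' S) - f S ≤ f (insert e S) - f S)
    if h : M.Nonempty then greedyAux f I X n (insert (M.min' h) S) else S

/-- The standard greedy algorithm on ground set `X`. -/
noncomputable def greedy {V : Type*} [Fintype V] [DecidableEq V] [LinearOrder V]
    (f : Finset V → ℝ) (I : Finset V → Prop) [DecidablePred I]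
    (X : Finset V) : Finset V :=
  greedyAux f I X (Fintype.card V) ∅
/-- Expectation of `g` over a uniformly random assignment of elements to `m` machines. -/
noncomputable def expAssign {V : Type*} [Fintype V] [DecidableEq V] (m : ℕ) (g : (V → Fin m) → ℝ) : ℝ :=
  (∑ σ : V → Fin m, g σ) / (Fintype.card (V → Fin m) : ℝ)

/-- The set of elements assigned to machine `i` by the assignment `σ`. -/
def machineSet {V : Type*} [Fintype V] [DecidableEq V] {m : ℕ}
    (σ : V → Fin m) (i : Fin m) : Finset V :=
  Finset.univ.filter (fun e => σ e = i)


/-! ### Auxiliary lemmas -/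

set_option linter.unusedSectionVars false

section GreedyLemmas
variable {V : Type*} [Fintype V] [DecidableEq V] [LinearOrder V]
  (f : Finset V → ℝ) (I : Finset V → Prop) [DecidablePred I]

/-- Candidate set at state `S`. -/
noncomputable def rgCand (X S : Finset V) : Finset V :=
  (X \ S).filter (fun e => I (insert e S) ∧ 0 ≤ f (insert e S) - f S)

/-- Maximizers of the marginal gain among candidates. -/
noncomputable def rgMaxi (X S : Finset V) : Finset V :=
  (rgCand f I X S).filter
    (fun e => ∀ e' ∈ rgCand f I X S, f (insert e' S) - f S ≤ f (insert e S) - f S)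

lemma rg_greedyAux_succ (X S : Finset V) (n : ℕ) :
    greedyAux f I X (n+1) S =
      if h : (rgMaxi f I X S).Nonempty then
        greedyAux f I X n (insert ((rgMaxi f I X S).min' h) S)
      else S := rfl

lemma rg_subset_greedyAux (X : Finset V) : ∀ n S, S ⊆ greedyAux f I X n S := by
  intro n
  induction n with
  | zero => intro S; simp [greedyAux]
  | succ n ih =>
    intro S
    rw [rg_greedyAux_succ]
    split
    · exact (Finset.subset_insert _ _).trans (ih _)
    · exact subset_rfl

lemma rg_cand_subset {A X : Finset V} (h : A ⊆ X) (S : Finset V) :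
    rgCand f I A S ⊆ rgCand f I X S :=
  Finset.filter_subset_filter _ (Finset.sdiff_subset_sdiff h subset_rfl)

lemma rg_maxi_subset_cand (X S : Finset V) : rgMaxi f I X S ⊆ rgCand f I X S :=
  Finset.filter_subset _ _

lemma rg_maxi_nonempty (X S : Finset V) (h : (rgCand f I X S).Nonempty) :
    (rgMaxi f I X S).Nonempty := by
  obtain ⟨b, hb, hmax⟩ := Finset.exists_max_image (rgCand f I X S)
    (fun e => f (insert e S) - f S) h
  exact ⟨b, Finset.mem_filter.mpr ⟨hb, hmax⟩⟩

lemma rg_choice_restrict {A X S : Finset V} (hAX : A ⊆ X) (hM : (rgMaxi f I X S).Nonempty)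
    (hmA : (rgMaxi f I X S).min' hM ∈ A) :
    ∃ hA : (rgMaxi f I A S).Nonempty, (rgMaxi f I A S).min' hA = (rgMaxi f I X S).min' hM := by
  set m := (rgMaxi f I X S).min' hM with hm
  have hmM : m ∈ rgMaxi f I X S := Finset.min'_mem _ _
  rw [rgMaxi, Finset.mem_filter] at hmM
  obtain ⟨hmc, hmax⟩ := hmM
  have hmcA : m ∈ rgCand f I A S := by
    rw [rgCand, Finset.mem_filter, Finset.mem_sdiff] at hmc ⊢
    exact ⟨⟨hmA, hmc.1.2⟩, hmc.2⟩
  have hmmaxA : m ∈ rgMaxi f I A S :=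
    Finset.mem_filter.mpr ⟨hmcA, fun e' he' => hmax e' (rg_cand_subset f I hAX S he')⟩
  have hA : (rgMaxi f I A S).Nonempty := ⟨m, hmmaxA⟩
  refine ⟨hA, ?_⟩
  set m₁ := (rgMaxi f I A S).min' hA with hm1
  have hm1M : m₁ ∈ rgMaxi f I A S := Finset.min'_mem _ _
  rw [rgMaxi, Finset.mem_filter] at hm1M
  obtain ⟨hm1c, hm1max⟩ := hm1M
  have hm1X : m₁ ∈ rgMaxi f I X S := by
    refine Finset.mem_filter.mpr ⟨rg_cand_subset f I hAX S hm1c, fun e' he' => ?_⟩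
    exact le_trans (hmax e' he') (hm1max m hmcA)
  have h1 : m ≤ m₁ := Finset.min'_le _ _ hm1X
  have h2 : m₁ ≤ m := Finset.min'_le _ _ hmmaxA
  exact le_antisymm h2 h1

/-- Localization for `greedyAux`: rejected elements can be added to the ground set
without changing the output. -/
lemma rg_greedyAux_union : ∀ (n : ℕ) (A B S : Finset V),
    (∀ e ∈ B, e ∉ greedyAux f I (insert e A) n S) →
    greedyAux f I (A ∪ B) n S = greedyAux f I A n S := by
  intro n
  induction n with
  | zero => intro A B S _; rfl
  | succ n ih =>
    intro A B S hB
    rw [rg_greedyAux_succ, rg_greedyAux_succ]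
    by_cases hM : (rgMaxi f I (A ∪ B) S).Nonempty
    · set m := (rgMaxi f I (A ∪ B) S).min' hM with hmdef
      have hmc : m ∈ rgCand f I (A ∪ B) S := rg_maxi_subset_cand f I _ _ (Finset.min'_mem _ _)
      have hmA : m ∈ A := by
        by_contra hmA
        have hmB : m ∈ B := by
          rw [rgCand, Finset.mem_filter, Finset.mem_sdiff, Finset.mem_union] at hmc
          tauto
        obtain ⟨hA', heq⟩ := rg_choice_restrict f I (show insert m A ⊆ A ∪ B by
          intro x hx; rw [Finset.mem_insert] at hx; rcases hx with h | h
          · exact Finset.mem_union_right _ (h ▸ hmB)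
          · exact Finset.mem_union_left _ h) hM (Finset.mem_insert_self m A)
        have hcontra := hB m hmB
        rw [rg_greedyAux_succ, dif_pos hA', heq] at hcontra
        exact hcontra (rg_subset_greedyAux f I _ n _ (Finset.mem_insert_self m S))
      obtain ⟨hA, heqA⟩ := rg_choice_restrict f I Finset.subset_union_left hM hmA
      rw [dif_pos hM, dif_pos hA, heqA]
      apply ih
      intro e he
      have h1 := hB e he
      rw [rg_greedyAux_succ] at h1
      by_cases hMe : (rgMaxi f I (insert e A) S).Nonempty
      · rw [dif_pos hMe] at h1
        set me := (rgMaxi f I (insert e A) S).min' hMe with hmedef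
        have hme_ne : me ≠ e := by
          intro h
          exact h1 (h ▸ rg_subset_greedyAux f I _ n _ (Finset.mem_insert_self me S))
        have hmeA : me ∈ A := by
          have := rg_maxi_subset_cand f I _ _ (Finset.min'_mem _ hMe)
          rw [rgCand, Finset.mem_filter, Finset.mem_sdiff, Finset.mem_insert] at this
          rcases this.1.1 with h | h
          · exact absurd h hme_ne
          · exact h
        obtain ⟨hA2, heq2⟩ := rg_choice_restrict f I (Finset.subset_insert e A) hMe hmeA
        have hproof : (rgMaxi f I A S).min' hA2 = (rgMaxi f I A S).min' hA := rfl
        have : me = m := by rw [hmedef, ← heq2, hproof, heqA, hmdef]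
        rwa [this] at h1
      · exfalso
        apply hMe
        apply rg_maxi_nonempty
        have : m ∈ rgCand f I A S := by
          rw [rgCand, Finset.mem_filter, Finset.mem_sdiff] at hmc ⊢
          exact ⟨⟨hmA, hmc.1.2⟩, hmc.2⟩
        exact ⟨m, rg_cand_subset f I (Finset.subset_insert e A) S this⟩
    · rw [dif_neg hM, dif_neg]
      intro hA
      apply hM
      apply rg_maxi_nonempty
      obtain ⟨b, hb⟩ := hA
      exact ⟨b, rg_cand_subset f I Finset.subset_union_left S (rg_maxi_subset_cand f I _ _ hb)⟩

lemma rg_greedy_union (A B : Finset V) (hB : ∀ e ∈ B, e ∉ greedy f I (insert e A)) :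
    greedy f I (A ∪ B) = greedy f I A :=
  rg_greedyAux_union f I _ A B ∅ hB

end GreedyLemmas

section ChainLemmas
variable {V : Type*} [Fintype V] [DecidableEq V] (f : Finset V → ℝ)

/-- Number of sets in `l` containing `e`. -/
def rgCnt (l : List (Finset V)) (e : V) : ℕ := l.countP (fun T => e ∈ T)

/-- The `k`-th level set of the counting function of `l`. -/
def rgLvl (l : List (Finset V)) (k : ℕ) : Finset V :=
  Finset.univ.filter (fun e => k ≤ rgCnt l e)

lemma rgCnt_le (l : List (Finset V)) (e : V) : rgCnt l e ≤ l.length :=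
  List.countP_le_length

lemma rgCnt_cons (S : Finset V) (l : List (Finset V)) (e : V) :
    rgCnt (S :: l) e = rgCnt l e + (if e ∈ S then 1 else 0) := by
  simp [rgCnt, List.countP_cons]

lemma rgLvl_zero (l : List (Finset V)) : rgLvl l 0 = Finset.univ := by
  simp [rgLvl]

lemma rgLvl_top (l : List (Finset V)) : rgLvl l (l.length + 1) = ∅ := by
  simp only [rgLvl, Finset.filter_eq_empty_iff]
  intro e _
  have := rgCnt_le l e
  omega

lemma rgLvl_chain (l : List (Finset V)) (k : ℕ) : rgLvl l (k+1) ⊆ rgLvl l k := by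
  intro e he
  simp only [rgLvl, Finset.mem_filter] at he ⊢
  exact ⟨he.1, by omega⟩

lemma rgLvl_cons (S : Finset V) (l : List (Finset V)) (k : ℕ) :
    rgLvl (S :: l) (k+1) = rgLvl l (k+1) ∪ (S ∩ rgLvl l k) := by
  ext e
  simp only [rgLvl, Finset.mem_filter, Finset.mem_union, Finset.mem_inter, Finset.mem_univ,
    true_and, rgCnt_cons]
  by_cases h : e ∈ S <;> simp [h] <;> omega

lemma rg_telescope (hsub : Submodular f) (M : ℕ → Finset V) (hM : ∀ k, M (k+1) ⊆ M k)
    (S : Finset V) : ∀ n : ℕ,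
    (∑ k ∈ Finset.range n, f (M (k+1) ∪ (S ∩ M k))) + f (S ∩ M n)
      ≤ f (S ∩ M 0) + ∑ k ∈ Finset.range n, f (M (k+1)) := by
  intro n
  induction n with
  | zero => simp
  | succ n ih =>
    rw [Finset.sum_range_succ, Finset.sum_range_succ]
    have key : f (M (n+1) ∪ (S ∩ M n)) + f (S ∩ M (n+1)) ≤ f (S ∩ M n) + f (M (n+1)) := by
      have h1 := hsub (S ∩ M n) (M (n+1))
      have h2 : (S ∩ M n) ∪ M (n+1) = M (n+1) ∪ (S ∩ M n) := Finset.union_comm _ _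
      have h3 : (S ∩ M n) ∩ M (n+1) = S ∩ M (n+1) := by
        rw [Finset.inter_assoc, Finset.inter_eq_right.mpr (hM n)]
      rw [h2, h3] at h1
      exact h1
    linarith

/-- The fundamental level-set inequality for submodular functions. -/
lemma rg_level_sum_le (hsub : Submodular f) : ∀ l : List (Finset V),
    ∑ k ∈ Finset.range l.length, f (rgLvl l (k+1)) ≤ (l.map f).sum := by
  intro l
  induction l with
  | nil => simp
  | cons S t ih =>
    have hlen : (S :: t).length = t.length + 1 := rfl
    rw [hlen, Finset.sum_range_succ]
    have h1 : ∀ k ∈ Finset.range t.length,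
        f (rgLvl (S :: t) (k+1)) = f (rgLvl t (k+1) ∪ (S ∩ rgLvl t k)) := by
      intro k _; rw [rgLvl_cons]
    rw [Finset.sum_congr rfl h1]
    have h2 : rgLvl (S :: t) (t.length + 1) = S ∩ rgLvl t t.length := by
      rw [rgLvl_cons, rgLvl_top, Finset.empty_union]
    rw [h2]
    have h3 := rg_telescope f hsub (rgLvl t) (rgLvl_chain t) S t.length
    rw [rgLvl_zero, Finset.inter_univ] at h3
    simp only [List.map_cons, List.sum_cons]
    linarith

end ChainLemmas

section IntegralLemma
variable {V : Type*} [Fintype V] [DecidableEq V]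

/-- The Lovász extension of a vector with values `c e / N` is an average of level sets. -/
lemma rg_lovasz_eq_sum (f : Finset V → ℝ) (c : V → ℕ) (N : ℕ) (hN : 0 < N)
    (hc : ∀ e, c e ≤ N) :
    lovasz f (fun e => (c e : ℝ) / N) =
      (1 / N) * ∑ k ∈ Finset.range N, f (Finset.univ.filter (fun e => k + 1 ≤ c e)) := by
  have hNR : (0:ℝ) < N := by exact_mod_cast hN
  set g : ℝ → ℝ := fun θ => f (Finset.univ.filter (fun i => θ ≤ (c i : ℝ) / N)) with hg
  set a : ℕ → ℝ := fun k => (k : ℝ) / N with ha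
  have hstep : ∀ k, ∀ θ ∈ Set.Ioc (a k) (a (k+1)),
      g θ = f (Finset.univ.filter (fun e => k + 1 ≤ c e)) := by
    intro k θ hθ
    simp only [hg]
    congr 1
    apply Finset.filter_congr
    intro e _
    simp only [ha, Set.mem_Ioc] at hθ
    obtain ⟨h1, h2⟩ := hθ
    constructor
    · intro h
      have : (k : ℝ) / N < (c e : ℝ) / N := lt_of_lt_of_le h1 h
      have : (k : ℝ) < c e := (div_lt_div_iff_of_pos_right hNR).mp this
      exact_mod_cast Nat.lt_iff_add_one_le.mp (by exact_mod_cast this)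
    · intro h
      have hcast : ((k : ℝ) + 1) ≤ (c e : ℝ) := by exact_mod_cast h
      have : ((k:ℝ)+1) / N ≤ (c e : ℝ) / N := by
        gcongr
      calc θ ≤ ((k:ℝ)+1)/N := by push_cast at h2 ⊢; linarith
        _ ≤ _ := this
  have hintg : ∀ k : ℕ, IntervalIntegrable g volume (a k) (a (k+1)) := by
    intro k
    have hle : a k ≤ a (k+1) := by
      simp only [ha]
      gcongr <;> push_cast <;> linarith
    rw [intervalIntegrable_iff_integrableOn_Ioc_of_le hle]
    have : IntegrableOn (fun _ : ℝ => f (Finset.univ.filter (fun e => k + 1 ≤ c e)))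
        (Set.Ioc (a k) (a (k+1))) volume := by
      refine (integrableOn_const_iff (C := f (Finset.univ.filter (fun e => k + 1 ≤ c e))) enorm_ne_top).mpr ?_
      right; exact measure_Ioc_lt_top
    exact this.congr_fun (fun θ hθ => (hstep k θ hθ).symm) measurableSet_Ioc
  have hpiece : ∀ k : ℕ, ∫ θ in (a k)..(a (k+1)), g θ =
      (1 / N) * f (Finset.univ.filter (fun e => k + 1 ≤ c e)) := by
    intro k
    have hle : a k ≤ a (k+1) := by
      simp only [ha]
      gcongr <;> push_cast <;> linarith
    rw [intervalIntegral.integral_of_le hle]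
    rw [MeasureTheory.setIntegral_congr_fun measurableSet_Ioc (hstep k)]
    rw [MeasureTheory.setIntegral_const]
    rw [Real.volume_real_Ioc_of_le hle]
    have : a (k+1) - a k = 1 / N := by
      simp only [ha]; push_cast; field_simp; ring
    rw [this]
    simp
  have key : ∫ θ in (a 0)..(a N), g θ =
      (1/N) * ∑ k ∈ Finset.range N, f (Finset.univ.filter (fun e => k + 1 ≤ c e)) := by
    rw [← intervalIntegral.sum_integral_adjacent_intervals (fun k _ => hintg k)]
    rw [Finset.mul_sum]
    exact Finset.sum_congr rfl (fun k _ => hpiece k)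
  have ha0 : a 0 = 0 := by simp [ha]
  have haN : a N = 1 := by simp only [ha]; field_simp
  rw [ha0, haN] at key
  rw [intervalIntegral.integral_of_le zero_le_one] at key
  rw [MeasureTheory.integral_Ioc_eq_integral_Ioo] at key
  exact key

lemma rg_countP_cast_sum {ι : Type*} (l : List ι) (p : ι → Prop) [DecidablePred p] :
    ((l.countP (fun a => p a) : ℕ) : ℝ) = (l.map (fun a => if p a then (1:ℝ) else 0)).sum := by
  induction l with
  | nil => simp
  | cons a t ih =>
    by_cases h : p a <;> simp [List.countP_cons, h, ih] <;> ring

end IntegralLemma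


/-- Lemma 3: expected value of the first-round greedy solution on each machine. -/
theorem randgreedi_single_machine {V : Type*} [Fintype V] [DecidableEq V] [LinearOrder V]
    (f : Finset V → ℝ) (I : Finset V → Prop) [DecidablePred I]
    (hsub : Submodular f) (hmono : ∀ A B : Finset V, A ⊆ B → f A ≤ f B)
    (hnn : ∀ A : Finset V, 0 ≤ f A)
    (hher : ∀ A B : Finset V, A ⊆ B → I B → I A) (hempty : I ∅)
    (α : ℝ) (hα : 0 < α)
    (happrox : ∀ V' O : Finset V, O ⊆ V' → I O → α * f O ≤ f (greedy f I V'))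
    (m : ℕ) (OPT : Finset V) (hOPT : I OPT) (i : Fin m) :
    α * lovasz f (fun e => charVec OPT e -
        (if e ∈ OPT then
          expAssign m (fun σ =>
            if e ∈ greedy f I (insert e (machineSet σ i)) then 1 else 0)
         else 0))
      ≤ expAssign m (fun σ => f (greedy f I (machineSet σ i))) := by
  classical
  set Oset : (V → Fin m) → Finset V :=
    fun σ => OPT.filter (fun a => a ∉ greedy f I (insert a (machineSet σ i))) with hOset
  set l : List (Finset V) :=
    (Finset.univ : Finset (V → Fin m)).toList.map Oset with hl
  set N : ℕ := Fintype.card (V → Fin m) with hN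
  have hNpos : 0 < N := by
    have : Nonempty (V → Fin m) := ⟨fun _ => i⟩
    rw [hN]; exact Fintype.card_pos
  have hNR : (0:ℝ) < N := by exact_mod_cast hNpos
  have hlen : l.length = N := by
    rw [hl, List.length_map, Finset.length_toList, hN, Fintype.card]
  have hexp : ∀ g : (V → Fin m) → ℝ, expAssign m g = (∑ σ : V → Fin m, g σ) / N :=
    fun g => rfl
  have hcnt : ∀ e : V, ((rgCnt l e : ℕ) : ℝ)
      = ∑ σ : V → Fin m, (if e ∈ Oset σ then (1:ℝ) else 0) := by
    intro e
    have h1 : rgCnt l e = Finset.univ.toList.countP (fun σ => e ∈ Oset σ) := by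
      rw [rgCnt, hl, List.countP_map]; rfl
    rw [h1, rg_countP_cast_sum]
    exact Finset.sum_map_toList _ _
  have hx : (fun e => charVec OPT e -
        (if e ∈ OPT then
          expAssign m (fun σ =>
            if e ∈ greedy f I (insert e (machineSet σ i)) then 1 else 0)
         else 0)) = fun e => (rgCnt l e : ℝ) / N := by
    funext e
    by_cases he : e ∈ OPT
    · simp only [charVec, if_pos he, hexp]
      have hsum : ∑ σ : V → Fin m, (if e ∈ Oset σ then (1:ℝ) else 0)
          = (N : ℝ) - ∑ σ : V → Fin m,
              (if e ∈ greedy f I (insert e (machineSet σ i)) then (1:ℝ) else 0) := by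
        rw [eq_sub_iff_add_eq, ← Finset.sum_add_distrib]
        have hone : ∀ σ ∈ (Finset.univ : Finset (V → Fin m)),
            (if e ∈ Oset σ then (1:ℝ) else 0)
              + (if e ∈ greedy f I (insert e (machineSet σ i)) then (1:ℝ) else 0) = 1 := by
          intro σ _
          have hmem : e ∈ Oset σ ↔ e ∉ greedy f I (insert e (machineSet σ i)) := by
            simp [hOset, Finset.mem_filter, he]
          by_cases hg : e ∈ greedy f I (insert e (machineSet σ i))
          · have : e ∉ Oset σ := fun hmem' => (hmem.mp hmem') hg
            simp [hg, this]
          · simp [hg, hmem.mpr hg]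
        rw [Finset.sum_congr rfl hone]
        simp [hN, Finset.card_univ]
      rw [hcnt, hsum]
      field_simp
    · have h0 : ∀ σ : V → Fin m, e ∉ Oset σ := by
        intro σ
        simp [hOset, he]
      rw [hcnt]
      simp [charVec, he, h0]
  rw [hx, rg_lovasz_eq_sum f (fun e => rgCnt l e) N hNpos
    (fun e => hlen ▸ rgCnt_le l e)]
  have hchain : ∑ k ∈ Finset.range N, f (Finset.univ.filter (fun e => k + 1 ≤ rgCnt l e))
      ≤ (l.map f).sum := by
    have h := rg_level_sum_le f hsub l
    rw [hlen] at h
    exact h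
  have hmapsum : (l.map f).sum = ∑ σ : V → Fin m, f (Oset σ) := by
    rw [hl, List.map_map]
    exact Finset.sum_map_toList _ _
  have hper : ∀ σ : V → Fin m, α * f (Oset σ) ≤ f (greedy f I (machineSet σ i)) := by
    intro σ
    have hloc : greedy f I (machineSet σ i ∪ Oset σ) = greedy f I (machineSet σ i) := by
      apply rg_greedy_union
      intro e heO
      rw [hOset] at heO
      exact (Finset.mem_filter.mp heO).2
    have h := happrox (machineSet σ i ∪ Oset σ) (Oset σ) Finset.subset_union_right
      (hher _ OPT (by rw [hOset]; exact Finset.filter_subset _ _) hOPT)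
    rwa [hloc] at h
  rw [hexp]
  have h5 : α * (∑ k ∈ Finset.range N, f (Finset.univ.filter (fun e => k + 1 ≤ rgCnt l e)))
      ≤ ∑ σ : V → Fin m, f (greedy f I (machineSet σ i)) := by
    calc α * (∑ k ∈ Finset.range N, f (Finset.univ.filter (fun e => k + 1 ≤ rgCnt l e)))
        ≤ α * (l.map f).sum := by
          exact mul_le_mul_of_nonneg_left hchain hα.le
      _ = ∑ σ : V → Fin m, α * f (Oset σ) := by
          rw [hmapsum, Finset.mul_sum]
      _ ≤ ∑ σ : V → Fin m, f (greedy f I (machineSet σ i)) :=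
          Finset.sum_le_sum (fun σ _ => hper σ)
  calc α * (1 / (N:ℝ) * ∑ k ∈ Finset.range N,
        f (Finset.univ.filter (fun e => k + 1 ≤ rgCnt l e)))
      = (α * ∑ k ∈ Finset.range N,
          f (Finset.univ.filter (fun e => k + 1 ≤ rgCnt l e))) / N := by ring
    _ ≤ (∑ σ : V → Fin m, f (greedy f I (machineSet σ i))) / N := by gcongr
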